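/- Let N_k, N₀ : ℝⁿ × ℝⁿ × ℝⁿ → [0,∞] for a sequence ε_k → 0⁺, where N₀ is continuous and, for each (q,η), the map v ↦ N₀(q,v,η) is convex. Assume the scaling monotonicity N_k(q, λv, η) ≥ N_k(q, v, η) for all k, all λ ≥ 1 and all (q,v,η). Assume further that for every continuously differentiable F : ℝⁿ → ℝ and every T > 0 the following Γ-convergence holds with respect to uniform convergence of Lipschitz curves on [0,T]: (liminf) for every Lipschitz q : [0,T] → ℝⁿ and every sequence of Lipschitz curves q_k converging uniformly to q, liminf_k ∫₀ᵀ N_k(q_k(t), q̇_k(t), −∇F(q_k(t))) dt ≥ ∫₀ᵀ N₀(q(t), q̇(t), −∇F(q(t))) dt; (recovery) for every Lipschitz q : [0,T] → ℝⁿ there exist Lipschitz curves q_k converging uniformly to q with lim_k ∫₀ᵀ N_k(q_k(t), q̇_k(t), −∇F(q_k(t))) dt = ∫₀ᵀ N₀(q(t), q̇(t), −∇F(q(t))) dt. Then N₀(q, v, η) ≥ N₀(q, 0, η) for all (q, v, η) ∈ ℝⁿ × ℝⁿ × ℝⁿ. -/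

import Mathlib

open Filter MeasureTheory
open scoped ENNReal NNReal RealInnerProductSpace Topology

section Aux

/-- Change of variables `s = a * t` for the Lebesgue integral of an arbitrary
`ℝ≥0∞`-valued function. -/
lemma aux_scale_lintegral {a : ℝ} (ha : 0 < a) (G : ℝ → ℝ≥0∞) :
    ∫⁻ s in Set.Icc (0:ℝ) a, G s
      = ENNReal.ofReal a * ∫⁻ t in Set.Icc (0:ℝ) 1, G (a * t) := by
  have hemb : MeasurableEmbedding (fun t : ℝ => a * t) := by
    have := (Homeomorph.mulLeft₀ a ha.ne').toMeasurableEquiv.measurableEmbedding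
    simpa [Homeomorph.coe_mulLeft₀] using this
  have hmp : MeasurePreserving (fun t : ℝ => a * t)
      ((ENNReal.ofReal a) • (volume : Measure ℝ)) volume := by
    refine ⟨measurable_const_mul a, ?_⟩
    rw [Measure.map_smul]
    have := Real.smul_map_volume_mul_left ha.ne'
    rwa [abs_of_pos ha] at this
  have h := hmp.setLIntegral_comp_preimage_emb hemb G (Set.Icc 0 a)
  have hpre : (fun t : ℝ => a * t) ⁻¹' (Set.Icc 0 a) = Set.Icc 0 1 := by
    rw [Set.preimage_const_mul_Icc₀ _ _ ha, zero_div, div_self ha.ne']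
  rw [hpre] at h
  rw [← h, Measure.restrict_smul, lintegral_smul_measure, smul_eq_mul]

/-- Junk-value-safe chain rule for `deriv` under scaling of time. -/
lemma aux_deriv_comp_const_mul {E : Type*} [NormedAddCommGroup E] [NormedSpace ℝ E]
    (f : ℝ → E) {a : ℝ} (ha : a ≠ 0) (t : ℝ) :
    deriv (fun s => f (a * s)) t = a • deriv f (a * t) := by
  by_cases hd : DifferentiableAt ℝ f (a * t)
  · have h1 : HasDerivAt (fun s : ℝ => a * s) a t := by
      simpa using (hasDerivAt_id t).const_mul a
    have h2 : HasDerivAt ((fun s => f s) ∘ (fun s : ℝ => a * s)) (a • deriv f (a * t)) t :=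
      HasDerivAt.scomp (hg := hd.hasDerivAt) (hh := h1)
    exact h2.deriv
  · have hd2 : ¬ DifferentiableAt ℝ (fun s => f (a * s)) t := by
      intro h
      apply hd
      have h3 : DifferentiableAt ℝ (fun u : ℝ => a⁻¹ * u) (a * t) :=
        by fun_prop
    -- compose: (fun s => f (a*s)) ∘ (a⁻¹ * ·) = f
      have h4 : DifferentiableAt ℝ ((fun s => f (a * s)) ∘ (fun u : ℝ => a⁻¹ * u)) (a * t) := by
        refine DifferentiableAt.comp _ ?_ h3
        rwa [inv_mul_cancel_left₀ ha]
      have heq : ((fun s => f (a * s)) ∘ (fun u : ℝ => a⁻¹ * u)) = f := by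
        funext u
        simp [Function.comp, mul_inv_cancel_left₀ ha]
      rwa [heq] at h4
    rw [deriv_zero_of_not_differentiableAt hd, deriv_zero_of_not_differentiableAt hd2,
      smul_zero]

/-- Lines are Lipschitz. -/
lemma aux_lip_line {E : Type*} [NormedAddCommGroup E] [NormedSpace ℝ E] (q v : E) :
    LipschitzWith ‖v‖₊ (fun t : ℝ => q + t • v) := by
  apply LipschitzWith.of_dist_le_mul
  intro s t
  have h : (q + s • v) - (q + t • v) = (s - t) • v := by
    rw [add_sub_add_left_eq_sub, ← sub_smul]
  rw [dist_eq_norm, h, norm_smul, Real.norm_eq_abs, Real.dist_eq, coe_nnnorm, mul_comm]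

lemma aux_lip_mul {a : ℝ} (ha : 0 ≤ a) :
    LipschitzWith a.toNNReal (fun t : ℝ => a * t) := by
  apply LipschitzWith.of_dist_le_mul
  intro s t
  rw [Real.dist_eq, Real.dist_eq, ← mul_sub, abs_mul, Real.coe_toNNReal _ ha, abs_of_nonneg ha]

end Aux

/-- If the tilted dissipation functionals built from `N_k`
Γ-converge (with respect to uniform convergence of Lipschitz curves) to the functional
with continuous integrand `N₀` which is convex in the rate variable, and the `N_k`
satisfy the scaling monotonicity `N_k(q, λv, η) ≥ N_k(q, v, η)` for `λ ≥ 1`, then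
`N₀(q, v, η) ≥ N₀(q, 0, η)` for all `(q, v, η)`. -/
theorem statement4 {n : ℕ}
    (ε : ℕ → ℝ) (hε : ∀ k, 0 < ε k) (hε0 : Tendsto ε atTop (𝓝 0))
    (N : ℕ → EuclideanSpace ℝ (Fin n) → EuclideanSpace ℝ (Fin n) →
      EuclideanSpace ℝ (Fin n) → ℝ≥0∞)
    (N0 : EuclideanSpace ℝ (Fin n) → EuclideanSpace ℝ (Fin n) →
      EuclideanSpace ℝ (Fin n) → ℝ≥0∞)
    (hN0cont : Continuous fun p : EuclideanSpace ℝ (Fin n) × EuclideanSpace ℝ (Fin n) ×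
      EuclideanSpace ℝ (Fin n) => N0 p.1 p.2.1 p.2.2)
    (hN0conv : ∀ q η x y : EuclideanSpace ℝ (Fin n), ∀ t : ℝ, 0 ≤ t → t ≤ 1 →
      N0 q (t • x + (1 - t) • y) η ≤
        ENNReal.ofReal t * N0 q x η + ENNReal.ofReal (1 - t) * N0 q y η)
    -- scaling monotonicity:
    (hscale : ∀ (k : ℕ) (q v η : EuclideanSpace ℝ (Fin n)) (lam : ℝ), 1 ≤ lam →
      N k q v η ≤ N k q (lam • v) η)
    -- Γ-liminf estimate, for every tilt `F` and every time horizon `T`: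
    (hliminf : ∀ (F : EuclideanSpace ℝ (Fin n) → ℝ), ContDiff ℝ 1 F → ∀ T : ℝ, 0 < T →
      ∀ c : ℝ → EuclideanSpace ℝ (Fin n), (∃ K : ℝ≥0, LipschitzOnWith K c (Set.Icc 0 T)) →
      ∀ ck : ℕ → ℝ → EuclideanSpace ℝ (Fin n),
        (∀ k, ∃ K : ℝ≥0, LipschitzOnWith K (ck k) (Set.Icc 0 T)) →
        TendstoUniformlyOn ck c atTop (Set.Icc 0 T) →
        (∫⁻ t in Set.Icc (0:ℝ) T, N0 (c t) (deriv c t) (-gradient F (c t))) ≤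
          liminf (fun k =>
            ∫⁻ t in Set.Icc (0:ℝ) T, N k (ck k t) (deriv (ck k) t) (-gradient F (ck k t)))
            atTop)
    -- recovery sequences, for every tilt `F` and every time horizon `T`:
    (hrecovery : ∀ (F : EuclideanSpace ℝ (Fin n) → ℝ), ContDiff ℝ 1 F → ∀ T : ℝ, 0 < T →
      ∀ c : ℝ → EuclideanSpace ℝ (Fin n), (∃ K : ℝ≥0, LipschitzOnWith K c (Set.Icc 0 T)) →
      ∃ ck : ℕ → ℝ → EuclideanSpace ℝ (Fin n),
        (∀ k, ∃ K : ℝ≥0, LipschitzOnWith K (ck k) (Set.Icc 0 T)) ∧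
        TendstoUniformlyOn ck c atTop (Set.Icc 0 T) ∧
        Tendsto (fun k =>
            ∫⁻ t in Set.Icc (0:ℝ) T, N k (ck k t) (deriv (ck k) t) (-gradient F (ck k t)))
          atTop
          (𝓝 (∫⁻ t in Set.Icc (0:ℝ) T, N0 (c t) (deriv c t) (-gradient F (c t))))) :
    ∀ q v η : EuclideanSpace ℝ (Fin n), N0 q 0 η ≤ N0 q v η := by
  classical
  intro q v η
  -- the linear tilt `F x = ⟪-η, x⟫` with gradient `-η`
  set Ft : EuclideanSpace ℝ (Fin n) → ℝ := fun y => ⟪-η, y⟫ with hFt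
  have hFcd : ContDiff ℝ 1 Ft := (innerSL ℝ (-η)).contDiff
  have hgrad : ∀ x : EuclideanSpace ℝ (Fin n), -gradient Ft x = η := by
    intro x
    have h1 : HasFDerivAt Ft (InnerProductSpace.toDual ℝ _ (-η)) x :=
      (InnerProductSpace.toDual ℝ _ (-η)).hasFDerivAt
    have h2 : HasGradientAt Ft (-η) x := hasGradientAt_iff_hasFDerivAt.mpr h1
    rw [h2.gradient, neg_neg]
  -- the key inequality, for every 0 < a ≤ 1
  have key : ∀ a : ℝ, 0 < a → a ≤ 1 →
      (∫⁻ t in Set.Icc (0:ℝ) 1, N0 (q + (a * t) • v) (a • v) η)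
        ≤ ENNReal.ofReal a⁻¹ * ∫⁻ s in Set.Icc (0:ℝ) a, N0 (q + s • v) v η := by
    intro a ha ha1
    -- the limit line and its recovery sequence on [0, a]
    have hlineLip : ∃ K : ℝ≥0, LipschitzOnWith K (fun s : ℝ => q + s • v) (Set.Icc 0 a) :=
      ⟨‖v‖₊, (aux_lip_line q v).lipschitzOnWith⟩
    obtain ⟨rk, hrkLip, hrkUnif, hrkTend⟩ := hrecovery Ft hFcd a ha (fun s => q + s • v) hlineLip
    have hmaps : Set.MapsTo (fun t : ℝ => a * t) (Set.Icc 0 1) (Set.Icc 0 a) := by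
      intro t ht
      exact ⟨mul_nonneg ha.le ht.1, by
        calc a * t ≤ a * 1 := mul_le_mul_of_nonneg_left ht.2 ha.le
        _ = a := mul_one a⟩
    -- rescaled curves
    set dk : ℕ → ℝ → EuclideanSpace ℝ (Fin n) := fun k t => rk k (a * t) with hdk
    set cMu : ℝ → EuclideanSpace ℝ (Fin n) := fun t => q + (a * t) • v with hcMu
    have hcMuLip : ∃ K : ℝ≥0, LipschitzOnWith K cMu (Set.Icc 0 1) := by
      refine ⟨‖v‖₊ * a.toNNReal, ?_⟩
      have h1 : LipschitzOnWith ‖v‖₊ (fun s : ℝ => q + s • v) (Set.Icc 0 a) :=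
        (aux_lip_line q v).lipschitzOnWith
      have h2 : LipschitzOnWith a.toNNReal (fun t : ℝ => a * t) (Set.Icc 0 1) :=
        (aux_lip_mul ha.le).lipschitzOnWith
      exact h1.comp h2 hmaps
    have hdkLip : ∀ k, ∃ K : ℝ≥0, LipschitzOnWith K (dk k) (Set.Icc 0 1) := by
      intro k
      obtain ⟨K, hK⟩ := hrkLip k
      have h2 : LipschitzOnWith a.toNNReal (fun t : ℝ => a * t) (Set.Icc 0 1) :=
        (aux_lip_mul ha.le).lipschitzOnWith
      exact ⟨K * a.toNNReal, hK.comp h2 hmaps⟩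
    have hdkUnif : TendstoUniformlyOn dk cMu atTop (Set.Icc 0 1) := by
      have := (hrkUnif.comp (fun t : ℝ => a * t)).mono (fun t ht => hmaps ht)
      exact this
    -- liminf estimate for the rescaled curves
    have hlim := hliminf Ft hFcd 1 one_pos cMu hcMuLip dk hdkLip hdkUnif
    simp only [hgrad] at hlim hrkTend
    -- compute the derivative of the limit curve
    have hderivMu : ∀ t : ℝ, deriv cMu t = a • v := by
      intro t
      have h1 : HasDerivAt (fun t : ℝ => a * t) a t := by
        simpa using (hasDerivAt_id t).const_mul a
      have h2 : HasDerivAt cMu (a • v) t := by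
        exact (h1.smul_const v).const_add q
      exact h2.deriv
    have hderivLine : ∀ s : ℝ, deriv (fun u : ℝ => q + u • v) s = v := by
      intro s
      have h2 : HasDerivAt (fun u : ℝ => q + u • v) v s := by
        simpa using ((hasDerivAt_id s).smul_const v).const_add q
      exact h2.deriv
    simp only [hderivMu] at hlim
    simp only [hderivLine] at hrkTend
    -- pointwise scaling bound
    have hpoint : ∀ k, ∀ t : ℝ,
        N k (dk k t) (deriv (dk k) t) η ≤ N k (rk k (a * t)) (deriv (rk k) (a * t)) η := by
      intro k t
      have hda : deriv (dk k) t = a • deriv (rk k) (a * t) := by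
        simpa [hdk] using aux_deriv_comp_const_mul (rk k) ha.ne' t
      rw [hda]
      have hs := hscale k (rk k (a * t)) (a • deriv (rk k) (a * t)) η a⁻¹
        ((one_le_inv₀ ha).2 ha1)
      simpa [smul_smul, inv_mul_cancel₀ ha.ne'] using hs
    -- change of variables
    have hcov : ∀ k,
        (∫⁻ t in Set.Icc (0:ℝ) 1, N k (rk k (a * t)) (deriv (rk k) (a * t)) η)
          = ENNReal.ofReal a⁻¹
            * ∫⁻ s in Set.Icc (0:ℝ) a, N k (rk k s) (deriv (rk k) s) η := by
      intro k
      rw [aux_scale_lintegral ha (fun s => N k (rk k s) (deriv (rk k) s) η), ← mul_assoc,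
        ← ENNReal.ofReal_mul (inv_nonneg.mpr ha.le), inv_mul_cancel₀ ha.ne',
        ENNReal.ofReal_one, one_mul]
    -- assemble
    calc (∫⁻ t in Set.Icc (0:ℝ) 1, N0 (q + (a * t) • v) (a • v) η)
        ≤ liminf (fun k => ∫⁻ t in Set.Icc (0:ℝ) 1, N k (dk k t) (deriv (dk k) t) η)
          atTop := hlim
      _ ≤ liminf (fun k =>
            ∫⁻ t in Set.Icc (0:ℝ) 1, N k (rk k (a * t)) (deriv (rk k) (a * t)) η) atTop := by
          refine liminf_le_liminf (Eventually.of_forall fun k => ?_)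
          exact lintegral_mono fun t => hpoint k t
      _ = liminf (fun k => ENNReal.ofReal a⁻¹
            * ∫⁻ s in Set.Icc (0:ℝ) a, N k (rk k s) (deriv (rk k) s) η) atTop := by
          simp only [hcov]
      _ = ENNReal.ofReal a⁻¹ * ∫⁻ s in Set.Icc (0:ℝ) a, N0 (q + s • v) v η := by
          refine Tendsto.liminf_eq ?_
          exact ENNReal.Tendsto.const_mul hrkTend (Or.inr ENNReal.ofReal_ne_top)
  -- conclude by contradiction, using continuity of `N0`
  by_contra hcon
  push_neg at hcon
  obtain ⟨c', hc'1, hc'2⟩ := exists_between hcon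
  obtain ⟨c, hc1, hc2⟩ := exists_between hc'2
  -- open sets from continuity
  have hV : IsOpen {p : EuclideanSpace ℝ (Fin n) × EuclideanSpace ℝ (Fin n) ×
      EuclideanSpace ℝ (Fin n) | c < N0 p.1 p.2.1 p.2.2} :=
    hN0cont.isOpen_preimage _ isOpen_Ioi
  have hW : IsOpen {p : EuclideanSpace ℝ (Fin n) × EuclideanSpace ℝ (Fin n) ×
      EuclideanSpace ℝ (Fin n) | N0 p.1 p.2.1 p.2.2 < c'} :=
    hN0cont.isOpen_preimage _ isOpen_Iio
  obtain ⟨δ₁, hδ₁, hball₁⟩ := Metric.isOpen_iff.1 hV (q, 0, η) hc2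
  obtain ⟨δ₂, hδ₂, hball₂⟩ := Metric.isOpen_iff.1 hW (q, v, η) hc'1
  set δ := min δ₁ δ₂ with hδdef
  have hδ : 0 < δ := lt_min hδ₁ hδ₂
  set a := min 1 (δ / (‖v‖ + 1)) with hadef
  have hvpos : (0:ℝ) < ‖v‖ + 1 := by positivity
  have ha : 0 < a := lt_min one_pos (div_pos hδ hvpos)
  have ha1 : a ≤ 1 := min_le_left _ _
  have hav : a * ‖v‖ < δ := by
    have h1 : a ≤ δ / (‖v‖ + 1) := min_le_right _ _
    have h2 : a * ‖v‖ ≤ (δ / (‖v‖ + 1)) * ‖v‖ :=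
      mul_le_mul_of_nonneg_right h1 (norm_nonneg v)
    have h3 : (δ / (‖v‖ + 1)) * ‖v‖ < δ := by
      rw [div_mul_eq_mul_div, div_lt_iff₀ hvpos]
      nlinarith [norm_nonneg v]
    linarith
  -- lower bound: c ≤ LHS of key
  have hlow : c ≤ ∫⁻ t in Set.Icc (0:ℝ) 1, N0 (q + (a * t) • v) (a • v) η := by
    have hptwise : ∀ t ∈ Set.Icc (0:ℝ) 1, c ≤ N0 (q + (a * t) • v) (a • v) η := by
      intro t ht
      have hmem : ((q + (a * t) • v, a • v, η) : EuclideanSpace ℝ (Fin n) ×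
          EuclideanSpace ℝ (Fin n) × EuclideanSpace ℝ (Fin n)) ∈
          Metric.ball ((q, 0, η) : EuclideanSpace ℝ (Fin n) ×
          EuclideanSpace ℝ (Fin n) × EuclideanSpace ℝ (Fin n)) δ₁ := by
        rw [Metric.mem_ball, Prod.dist_eq, Prod.dist_eq]
        have hd1 : dist (q + (a * t) • v) q ≤ a * ‖v‖ := by
          rw [dist_eq_norm, add_sub_cancel_left, norm_smul, Real.norm_eq_abs, abs_mul,
            abs_of_pos ha]
          have : |t| ≤ 1 := by rw [abs_of_nonneg ht.1]; exact ht.2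
          nlinarith [mul_nonneg (mul_nonneg ha.le (norm_nonneg v)) (sub_nonneg.mpr this)]
        have hd2 : dist (a • v) (0 : EuclideanSpace ℝ (Fin n)) = a * ‖v‖ := by
          rw [dist_zero_right, norm_smul, Real.norm_eq_abs, abs_of_pos ha]
        have hd3 : dist η η = 0 := dist_self η
        have hlt : a * ‖v‖ < δ₁ := lt_of_lt_of_le hav (min_le_left _ _)
        apply max_lt (lt_of_le_of_lt hd1 hlt)
        apply max_lt (by rw [hd2]; exact hlt)
        rw [hd3]; exact hδ₁
      exact le_of_lt (hball₁ hmem)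
    calc c = c * volume (Set.Icc (0:ℝ) 1) := by
          rw [Real.volume_Icc]; norm_num
      _ = ∫⁻ _ in Set.Icc (0:ℝ) 1, c := (setLIntegral_const _ _).symm
      _ ≤ _ := lintegral_mono_ae ((ae_restrict_iff' measurableSet_Icc).2
          (Eventually.of_forall hptwise))
  -- upper bound on the recovery side
  have hup : (∫⁻ s in Set.Icc (0:ℝ) a, N0 (q + s • v) v η) ≤ c' * ENNReal.ofReal a := by
    have hptwise : ∀ s ∈ Set.Icc (0:ℝ) a, N0 (q + s • v) v η ≤ c' := by
      intro s hs
      have hmem : ((q + s • v, v, η) : EuclideanSpace ℝ (Fin n) ×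
          EuclideanSpace ℝ (Fin n) × EuclideanSpace ℝ (Fin n)) ∈
          Metric.ball ((q, v, η) : EuclideanSpace ℝ (Fin n) ×
          EuclideanSpace ℝ (Fin n) × EuclideanSpace ℝ (Fin n)) δ₂ := by
        rw [Metric.mem_ball, Prod.dist_eq, Prod.dist_eq]
        have hd1 : dist (q + s • v) q ≤ a * ‖v‖ := by
          rw [dist_eq_norm, add_sub_cancel_left, norm_smul, Real.norm_eq_abs,
            abs_of_nonneg hs.1]
          exact mul_le_mul_of_nonneg_right hs.2 (norm_nonneg v)
        have hlt : a * ‖v‖ < δ₂ := lt_of_lt_of_le hav (min_le_right _ _)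
        apply max_lt (lt_of_le_of_lt hd1 hlt)
        simp [hδ₂]
      exact le_of_lt (hball₂ hmem)
    calc (∫⁻ s in Set.Icc (0:ℝ) a, N0 (q + s • v) v η)
        ≤ ∫⁻ _ in Set.Icc (0:ℝ) a, c' := lintegral_mono_ae
          ((ae_restrict_iff' measurableSet_Icc).2 (Eventually.of_forall hptwise))
      _ = c' * volume (Set.Icc (0:ℝ) a) := setLIntegral_const _ _
      _ = c' * ENNReal.ofReal a := by rw [Real.volume_Icc, sub_zero]
  -- combine
  have hfinal : c ≤ c' := by
    have h1 := key a ha ha1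
    have h2 : ENNReal.ofReal a⁻¹ * (∫⁻ s in Set.Icc (0:ℝ) a, N0 (q + s • v) v η)
        ≤ ENNReal.ofReal a⁻¹ * (c' * ENNReal.ofReal a) :=
      by gcongr
    have h3 : ENNReal.ofReal a⁻¹ * (c' * ENNReal.ofReal a) = c' := by
      rw [mul_comm c' (ENNReal.ofReal a), ← mul_assoc,
        ← ENNReal.ofReal_mul (inv_nonneg.mpr ha.le), inv_mul_cancel₀ ha.ne',
        ENNReal.ofReal_one, one_mul]
    calc c ≤ _ := hlow
      _ ≤ _ := h1
      _ ≤ _ := h2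
      _ = c' := h3
  exact absurd hfinal (not_le.mpr hc1)
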